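/- Consider the weighted graph built from vector sets A, B ⊆ {0,1}^d and index set I: weight-t edges a → i iff a[i]=1, weight-1 edges i → b iff b[i]=1, and weight-(t+1) edges i → a for all i ∈ I, a ∈ A. If a ∈ A and b ∈ B are orthogonal (and every vector has at least one 1-coordinate), then every directed path from a to b has total weight at least 3t+2, and there is no path from b to a. -/

import Mathlib

/-- Weight of a shortest directed path from `a` to `b` in the digraph with
edge relation `E` and edge weights `w`; `⊤` if there is no path. -/
noncomputable def wdist {V : Type*} (E : V → V → Prop) (w : V → V → ENNReal) (a b : V) : ENNReal :=
  sInf {c : ENNReal | ∃ l : List V, List.Chain E a l ∧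
    (a :: l).getLast (List.cons_ne_nil a l) = b ∧
    c = (List.zip (a :: l) l).foldr (fun p acc => w p.1 p.2 + acc) 0}

/-- The weighted OV graph: red vertices A (type α), blue vertices B (type β)
and index vertices \`Fin d\`. Edges: a → i of weight t when a[i] = 1,
i → b of weight 1 when b[i] = 1, and i → a of weight t+1 for all i, a. -/
def wovE (d : ℕ) {α β : Type*} (vA : α → Fin d → Bool) (vB : β → Fin d → Bool) :
    (α ⊕ (β ⊕ Fin d)) → (α ⊕ (β ⊕ Fin d)) → Prop :=
  fun u v => match u, v with
  | Sum.inl a, Sum.inr (Sum.inr i) => vA a i = true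
  | Sum.inr (Sum.inr i), Sum.inr (Sum.inl b) => vB b i = true
  | Sum.inr (Sum.inr _), Sum.inl _ => True
  | _, _ => False

/-- The weights of the weighted OV graph. -/
noncomputable def wovW (t d : ℕ) {α β : Type*} :
    (α ⊕ (β ⊕ Fin d)) → (α ⊕ (β ⊕ Fin d)) → ENNReal :=
  fun u v => match u, v with
  | Sum.inl _, Sum.inr (Sum.inr _) => (t : ENNReal)
  | Sum.inr (Sum.inr _), Sum.inr (Sum.inl _) => 1
  | Sum.inr (Sum.inr _), Sum.inl _ => (t : ENNReal) + 1
  | _, _ => 0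

noncomputable def pcost {V : Type*} (w : V → V → ENNReal) (u : V) (l : List V) : ENNReal :=
  (List.zip (u :: l) l).foldr (fun p acc => w p.1 p.2 + acc) 0

lemma pcost_cons {V : Type*} (w : V → V → ENNReal) (u x : V) (l : List V) :
    pcost w u (x :: l) = w u x + pcost w x l := rfl

/-- potential function -/
noncomputable def wpot (t : ℕ) {α β d : Type*} : (α ⊕ (β ⊕ d)) → ENNReal :=
  fun u => match u with
  | Sum.inl _ => (t : ENNReal) + 1
  | Sum.inr (Sum.inl _) => 0
  | Sum.inr (Sum.inr _) => 1

lemma pot_le {α β : Type*} (t d : ℕ)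
    (vA : α → Fin d → Bool) (vB : β → Fin d → Bool) (b : β) :
    ∀ (l : List (α ⊕ (β ⊕ Fin d))) (u : α ⊕ (β ⊕ Fin d)),
      List.Chain (wovE d vA vB) u l →
      (u :: l).getLast (List.cons_ne_nil u l) = Sum.inr (Sum.inl b) →
      wpot t u ≤ pcost (wovW t d) u l := by
  intro l
  induction l with
  | nil =>
    intro u _ hlast
    simp at hlast
    subst hlast
    simp [wpot, pcost]
  | cons x l ih =>
    intro u hchain hlast
    replace hchain := List.isChain_cons_cons.mp hchain
    obtain ⟨hedge, hchain⟩ := hchain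
    have hlast' : (x :: l).getLast (List.cons_ne_nil x l) = Sum.inr (Sum.inl b) := by
      rw [← hlast]; exact (List.getLast_cons (List.cons_ne_nil x l)).symm
    have hih := ih x hchain hlast'
    rw [pcost_cons]
    match u, x, hedge with
    | Sum.inl a', Sum.inr (Sum.inr i), _ =>
      refine le_trans ?_ (add_le_add_right hih _)
      show (t : ENNReal) + 1 ≤ (t : ENNReal) + 1
      exact le_refl _
    | Sum.inr (Sum.inr i), Sum.inr (Sum.inl b'), _ =>
      refine le_trans ?_ (add_le_add_right zero_le _)
      show (1 : ENNReal) ≤ 1 + 0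
      simp
    | Sum.inr (Sum.inr i), Sum.inl a', _ =>
      refine le_trans ?_ (add_le_add_right hih _)
      show (1 : ENNReal) ≤ ((t : ENNReal) + 1) + ((t : ENNReal) + 1)
      exact le_trans le_add_self le_self_add

/-- YES case: if a ∈ A and b ∈ B are orthogonal, every directed path from a to
b has total weight at least 3t+2, and there is no path from b to a. -/
theorem stmt16 {α β : Type*} (t d : ℕ) (ht : 1 ≤ t)
    (vA : α → Fin d → Bool) (vB : β → Fin d → Bool)
    (honeA : ∀ a : α, ∃ i : Fin d, vA a i = true)
    (honeB : ∀ b : β, ∃ i : Fin d, vB b i = true)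
    (a : α) (b : β)
    (horth : ∀ i : Fin d, ¬ (vA a i = true ∧ vB b i = true)) :
    ((3 * t + 2 : ℕ) : ENNReal) ≤
        wdist (wovE d vA vB) (wovW t d) (Sum.inl a) (Sum.inr (Sum.inl b)) ∧
      ¬ Relation.ReflTransGen (wovE d vA vB)
          (Sum.inr (Sum.inl b)) (Sum.inl a) := by
  constructor
  · apply le_sInf
    rintro c ⟨l, hchain, hlast, rfl⟩
    show ((3 * t + 2 : ℕ) : ENNReal) ≤ pcost (wovW t d) (Sum.inl a) l
    match l, hchain, hlast with
    | [], _, hlast => simp at hlast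
    | [x], hchain, hlast =>
      replace hchain := List.isChain_cons_cons.mp hchain
      obtain ⟨hedge, -⟩ := hchain
      match x, hedge with
      | Sum.inr (Sum.inr i), _ => simp at hlast
    | x :: y :: l, hchain, hlast =>
      replace hchain := List.isChain_cons_cons.mp hchain; rw [List.chain_cons] at hchain
      obtain ⟨he1, he2, hchain⟩ := hchain
      match x, he1 with
      | Sum.inr (Sum.inr i), he1 =>
        match y, he2 with
        | Sum.inr (Sum.inl b'), he2 =>
          -- then l must be nil (b' has out-degree 0), so b' = b, contradiction
          match l, hchain with
          | [], _ =>
            simp at hlast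
            subst hlast
            exact absurd ⟨he1, he2⟩ (horth i)
          | z :: l, hchain =>
            rw [List.chain_cons] at hchain
            exact absurd hchain.1 (by cases z with
              | inl => exact id
              | inr c => cases c <;> exact id)
        | Sum.inl a', _ =>
          have hlast' : (Sum.inl a' :: l).getLast (List.cons_ne_nil _ l)
              = (Sum.inr (Sum.inl b) : α ⊕ (β ⊕ Fin d)) := by
            rw [← hlast]
            simp [List.getLast_cons]
          have hp := pot_le t d vA vB b l (Sum.inl a') hchain hlast'
          have hp' : (t : ENNReal) + 1 ≤ pcost (wovW t d) (Sum.inl a') l := hp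
          rw [pcost_cons, pcost_cons]
          show ((3 * t + 2 : ℕ) : ENNReal) ≤
            (t : ENNReal) + (((t : ENNReal) + 1) + pcost (wovW t d) (Sum.inl a') l)
          calc ((3 * t + 2 : ℕ) : ENNReal)
              = (t : ENNReal) + (((t : ENNReal) + 1) + ((t : ENNReal) + 1)) := by
                push_cast; ring
            _ ≤ _ := add_le_add_right (add_le_add_right hp' _) _
  · intro h
    rcases Relation.ReflTransGen.cases_head h with h | ⟨c, hc, -⟩
    · simp at h
    · cases c with
      | inl => exact hc
      | inr c => cases c <;> exact hc
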